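/- Let k ≥ 1 and ρ ≥ 1 be natural numbers and let p', q' : Fin (k·ρ) → ℝ be positive vectors (p'_j > 0, q'_j > 0 for all j). Define the block-aggregated vectors p, q : Fin k → ℝ by p_r = Σ_{i=0}^{ρ-1} p'_{rρ+i} and q_r = Σ_{i=0}^{ρ-1} q'_{rρ+i}. Then for every λ ∈ (0,1), Σ_{r=0}^{k-1} p_r^{1-λ} q_r^{λ} ≥ Σ_{j=0}^{kρ-1} p'_j^{1-λ} q'_j^{λ}. -/

import Mathlib

/-- The index `r*ρ + i` of the `i`-th fine quantizer cell inside the `r`-th coarse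
block, as an element of `Fin (k * ρ)`. -/
def blockIdx {k ρ : ℕ} (r : Fin k) (i : Fin ρ) : Fin (k * ρ) :=
  ⟨r.val * ρ + i.val, by
    have h1 : r.val * ρ + i.val < (r.val + 1) * ρ := by
      rw [Nat.succ_mul]; exact Nat.add_lt_add_left i.isLt _
    exact lt_of_lt_of_le h1 (Nat.mul_le_mul_right ρ r.isLt)⟩

lemma blockIdx_bijective {k ρ : ℕ} :
    Function.Bijective (fun ri : Fin k × Fin ρ => blockIdx ri.1 ri.2) := by
  rw [Fintype.bijective_iff_injective_and_card]
  refine ⟨?_, by simp [Fintype.card_prod]⟩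
  rintro ⟨r, i⟩ ⟨r', i'⟩ h
  simp only [blockIdx, Fin.mk.injEq] at h
  have hi := i.isLt
  have hi' := i'.isLt
  have hrr' : r.val = r'.val := by
    rcases Nat.lt_trichotomy r.val r'.val with hc | hc | hc
    · have : (r.val + 1) * ρ ≤ r'.val * ρ := Nat.mul_le_mul_right ρ hc
      nlinarith [Nat.succ_mul r.val ρ]
    · exact hc
    · have : (r'.val + 1) * ρ ≤ r.val * ρ := Nat.mul_le_mul_right ρ hc
      nlinarith [Nat.succ_mul r'.val ρ]
  rw [hrr'] at h
  have : i.val = i'.val := by omega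
  exact Prod.ext (Fin.ext hrr') (Fin.ext this)

/-- Merging `ρ` consecutive quantizer cells cannot increase the Chernoff-type
sum: for positive vectors `p', q'` on `Fin (k*ρ)` and their block aggregations
`p, q` on `Fin k`, and every `λ ∈ (0,1)`,
`∑ r, p r ^ (1-λ) * q r ^ λ ≥ ∑ j, p' j ^ (1-λ) * q' j ^ λ`. -/
theorem block_aggregation_chernoff_sum_ge
    (k ρ : ℕ) (hk : 1 ≤ k) (hρ : 1 ≤ ρ)
    (p' q' : Fin (k * ρ) → ℝ)
    (hp' : ∀ j, 0 < p' j) (hq' : ∀ j, 0 < q' j)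
    (p q : Fin k → ℝ)
    (hp : ∀ r, p r = ∑ i : Fin ρ, p' (blockIdx r i))
    (hq : ∀ r, q r = ∑ i : Fin ρ, q' (blockIdx r i))
    (l : ℝ) (hl : l ∈ Set.Ioo (0 : ℝ) 1) :
    ∑ r, p r ^ (1 - l) * q r ^ l ≥ ∑ j, p' j ^ (1 - l) * q' j ^ l := by
  obtain ⟨hl0, hl1⟩ := hl
  have h1l : (0:ℝ) < 1 - l := by linarith
  have key : ∑ j, p' j ^ (1 - l) * q' j ^ l
      = ∑ r : Fin k, ∑ i : Fin ρ, p' (blockIdx r i) ^ (1 - l) * q' (blockIdx r i) ^ l := by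
    rw [← Fintype.sum_bijective _ blockIdx_bijective
      (fun ri : Fin k × Fin ρ => p' (blockIdx ri.1 ri.2) ^ (1 - l) * q' (blockIdx ri.1 ri.2) ^ l)
      (fun j => p' j ^ (1 - l) * q' j ^ l) (fun _ => rfl), Fintype.sum_prod_type]
  rw [key]
  apply Finset.sum_le_sum
  intro r _
  have hpq : Real.HolderConjugate (1 / (1 - l)) (1 / l) := by
    rw [Real.holderConjugate_iff]
    constructor
    · rw [lt_div_iff₀ h1l]; linarith
    · field_simp; ring
  have holder := Real.inner_le_Lp_mul_Lq_of_nonneg (Finset.univ : Finset (Fin ρ))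
    hpq (f := fun i => p' (blockIdx r i) ^ (1 - l)) (g := fun i => q' (blockIdx r i) ^ l)
    (fun i _ => Real.rpow_nonneg (hp' _).le _) (fun i _ => Real.rpow_nonneg (hq' _).le _)
  have e1 : ∀ i : Fin ρ, (p' (blockIdx r i) ^ (1 - l)) ^ (1 / (1 - l)) = p' (blockIdx r i) := by
    intro i
    rw [← Real.rpow_mul (hp' _).le, mul_one_div, div_self h1l.ne', Real.rpow_one]
  have e2 : ∀ i : Fin ρ, (q' (blockIdx r i) ^ l) ^ (1 / l) = q' (blockIdx r i) := by
    intro i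
    rw [← Real.rpow_mul (hq' _).le, mul_one_div, div_self hl0.ne', Real.rpow_one]
  simp only [e1, e2] at holder
  have ep : (1:ℝ) / (1 / (1 - l)) = 1 - l := by field_simp
  have eq' : (1:ℝ) / (1 / l) = l := by field_simp
  rw [ep, eq'] at holder
  rw [hp r, hq r]
  exact holder
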